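/- arXiv:2206.13512 — 2 statements merged into one kernel-verified Lean document; each statement's English description precedes it below -/
import Mathlib

section
/- (Banach–Schröder–Bernstein) If A is G-equidecomposable with a subset of B and B is G-equidecomposable with a subset of A, then A and B are G-equidecomposable. -/
open scoped Pointwise

/-- `A` and `B` are `G`-equidecomposable: there are finite partitions
`A = A₁ ∪ … ∪ Aₙ` and `B = B₁ ∪ … ∪ Bₙ` into pairwise disjoint pieces and
`g₁, …, gₙ ∈ G` with `Bᵢ = gᵢ • Aᵢ`. -/
def SetEquidecomp (G : Type*) {X : Type*} [Group G] [MulAction G X] (A B : Set X) : Prop :=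
  ∃ (n : ℕ) (P : Fin n → Set X) (g : Fin n → G),
    Pairwise (Function.onFun Disjoint P) ∧ (⋃ i, P i) = A ∧
    Pairwise (Function.onFun Disjoint fun i => g i • P i) ∧ (⋃ i, g i • P i) = B

/-- `E` is `G`-paradoxical: `E` is nonempty and splits into two disjoint pieces,
each `G`-equidecomposable with `E`. -/
def Paradoxical (G : Type*) {X : Type*} [Group G] [MulAction G X] (E : Set X) : Prop :=
  E.Nonempty ∧ ∃ A B : Set X, A ∪ B = E ∧ Disjoint A B ∧
    SetEquidecomp G A E ∧ SetEquidecomp G B E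

open Set Function

section Aux

variable {G X : Type*} [Group G] [MulAction G X] {A B : Set X}

/-- `f` acts on `A` piecewise by elements of `G`. -/
def PiecewiseG (G : Type*) {X : Type*} [Group G] [MulAction G X] (f : X → X) (A : Set X) :
    Prop :=
  ∃ (n : ℕ) (P : Fin n → Set X) (g : Fin n → G),
    Pairwise (Function.onFun Disjoint P) ∧ (⋃ i, P i) = A ∧
    ∀ i, ∀ x ∈ P i, f x = g i • x

lemma image_eq_smul {f : X → X} {P : Set X} {g : G} (hf : ∀ x ∈ P, f x = g • x) :
    f '' P = g • P := by
  ext y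
  constructor
  · rintro ⟨x, hx, rfl⟩
    rw [hf x hx]
    exact smul_mem_smul_set hx
  · rintro ⟨x, hx, rfl⟩
    exact ⟨x, hx, hf x hx⟩

lemma equidecomp_iff :
    SetEquidecomp G A B ↔ ∃ f : X → X, InjOn f A ∧ f '' A = B ∧ PiecewiseG G f A := by
  constructor
  · rintro ⟨n, P, g, hd, hA, hd', hB⟩
    classical
    set f : X → X := fun x => if h : ∃ i, x ∈ P i then g h.choose • x else x with hfdef
    have hf : ∀ i, ∀ x ∈ P i, f x = g i • x := by
      intro i x hx
      have h : ∃ j, x ∈ P j := ⟨i, hx⟩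
      have : h.choose = i := by
        by_contra hne
        exact (hd hne).le_bot ⟨h.choose_spec, hx⟩
      simp [hfdef, dif_pos h, this]
    have himg : ∀ i, f '' P i = g i • P i := fun i => image_eq_smul (hf i)
    refine ⟨f, ?_, ?_, n, P, g, hd, hA, hf⟩
    · intro x hx y hy hxy
      rw [← hA] at hx hy
      obtain ⟨i, hi⟩ := mem_iUnion.1 hx
      obtain ⟨j, hj⟩ := mem_iUnion.1 hy
      have hij : i = j := by
        by_contra hne
        have hdij := hd' hne
        simp only [Function.onFun] at hdij
        have h1m : f x ∈ g i • P i := by rw [hf i x hi]; exact smul_mem_smul_set hi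
        have h2m : f x ∈ g j • P j := by rw [hxy, hf j y hj]; exact smul_mem_smul_set hj
        exact Set.disjoint_left.1 hdij h1m h2m
      subst hij
      rw [hf i x hi, hf i y hj] at hxy
      exact smul_left_cancel _ hxy
    · rw [← hA, image_iUnion]
      simp_rw [himg]
      exact hB
  · rintro ⟨f, hinj, himg, n, P, g, hd, hA, hf⟩
    have hP : ∀ i, P i ⊆ A := fun i => hA ▸ subset_iUnion P i
    have him : ∀ i, f '' P i = g i • P i := fun i => image_eq_smul (hf i)
    refine ⟨n, P, g, hd, hA, ?_, ?_⟩
    · intro i j hij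
      simp only [onFun, ← him]
      exact (hd hij).image hinj (hP i) (hP j)
    · simp_rw [← him, ← image_iUnion, hA, himg]

lemma SetEquidecomp.symm (h : SetEquidecomp G A B) : SetEquidecomp G B A := by
  obtain ⟨n, P, g, hd, hA, hd', hB⟩ := h
  refine ⟨n, fun i => g i • P i, fun i => (g i)⁻¹, hd', hB, ?_, ?_⟩
  · simpa only [inv_smul_smul] using hd
  · simpa only [inv_smul_smul] using hA

/-- Restriction along the witnessing map. -/
lemma equidecomp_restrict {f : X → X} (hinj : InjOn f A) (hpc : PiecewiseG G f A)
    {A₁ : Set X} (hA₁ : A₁ ⊆ A) : SetEquidecomp G A₁ (f '' A₁) := by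
  obtain ⟨n, P, g, hd, hA, hf⟩ := hpc
  rw [equidecomp_iff]
  refine ⟨f, hinj.mono hA₁, rfl, n, fun i => P i ∩ A₁, g, ?_, ?_, ?_⟩
  · exact fun i j hij => (hd hij).mono inter_subset_left inter_subset_left
  · rw [← iUnion_inter, hA, inter_eq_right.2 hA₁]
  · exact fun i x hx => hf i x hx.1

lemma equidecomp_of_sum {n m : ℕ} (P : Fin n ⊕ Fin m → Set X) (g : Fin n ⊕ Fin m → G)
    (h1 : Pairwise (Function.onFun Disjoint P)) (h2 : ⋃ i, P i = A)
    (h3 : Pairwise (Function.onFun Disjoint fun i => g i • P i)) (h4 : ⋃ i, g i • P i = B) :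
    SetEquidecomp G A B := by
  have e : Fin (n + m) ≃ Fin n ⊕ Fin m := finSumFinEquiv.symm
  refine ⟨n + m, P ∘ e, g ∘ e, h1.comp_of_injective e.injective, ?_,
    h3.comp_of_injective e.injective, ?_⟩
  · exact (e.surjective.iUnion_comp P).trans h2
  · exact (e.surjective.iUnion_comp fun i => g i • P i).trans h4

lemma SetEquidecomp.union {A₁ A₂ B₁ B₂ : Set X} (h1 : SetEquidecomp G A₁ B₁)
    (h2 : SetEquidecomp G A₂ B₂) (hA : Disjoint A₁ A₂) (hB : Disjoint B₁ B₂) :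
    SetEquidecomp G (A₁ ∪ A₂) (B₁ ∪ B₂) := by
  obtain ⟨n, P, g, hd, hPA, hd', hPB⟩ := h1
  obtain ⟨m, Q, k, he, hQA, he', hQB⟩ := h2
  have hPsub : ∀ i, P i ⊆ A₁ := fun i => hPA ▸ subset_iUnion P i
  have hQsub : ∀ i, Q i ⊆ A₂ := fun i => hQA ▸ subset_iUnion Q i
  have hPsub' : ∀ i, g i • P i ⊆ B₁ := fun i => hPB ▸ subset_iUnion (fun i => g i • P i) i
  have hQsub' : ∀ i, k i • Q i ⊆ B₂ := fun i => hQB ▸ subset_iUnion (fun i => k i • Q i) i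
  apply equidecomp_of_sum (Sum.elim P Q) (Sum.elim g k)
  · rintro (i | i) (j | j) hij
    · exact hd (fun h => hij (by rw [h]))
    · exact hA.mono (hPsub i) (hQsub j)
    · exact (hA.mono (hPsub j) (hQsub i)).symm
    · exact he (fun h => hij (by rw [h]))
  · rw [iUnion_sum]; simp only [Sum.elim_inl, Sum.elim_inr, hPA, hQA]
  · rintro (i | i) (j | j) hij
    · exact hd' (fun h => hij (by rw [h]))
    · exact hB.mono (hPsub' i) (hQsub' j)
    · exact (hB.mono (hPsub' j) (hQsub' i)).symm
    · exact he' (fun h => hij (by rw [h]))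
  · rw [iUnion_sum]; simp only [Sum.elim_inl, Sum.elim_inr, hPB, hQB]

end Aux

/-- The Banach–Schröder–Bernstein theorem: if `A` is `G`-equidecomposable with a subset
of `B` and `B` is `G`-equidecomposable with a subset of `A`, then `A` and `B` are
`G`-equidecomposable. -/
theorem banach_schroeder_bernstein {G X : Type*} [Group G] [MulAction G X] {A B : Set X}
    (h1 : ∃ B' ⊆ B, SetEquidecomp G A B') (h2 : ∃ A' ⊆ A, SetEquidecomp G B A') :
    SetEquidecomp G A B := by
  obtain ⟨B', hB', hAB'⟩ := h1
  obtain ⟨A', hA', hBA'⟩ := h2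
  rw [equidecomp_iff] at hAB' hBA'
  obtain ⟨f, hfinj, hfimg, hfpc⟩ := hAB'
  obtain ⟨k, hkinj, hkimg, hkpc⟩ := hBA'
  -- the orbit construction
  let F : ℕ → Set X := fun n => Nat.rec (A \ k '' B) (fun _ s => k '' (f '' s)) n
  have hF0 : F 0 = A \ k '' B := rfl
  have hFs : ∀ n, F (n + 1) = k '' (f '' F n) := fun n => rfl
  set C : Set X := ⋃ n, F n with hC
  have hFA : ∀ n, F n ⊆ A := by
    intro n
    induction n with
    | zero => exact diff_subset
    | succ n ih =>
      rw [hFs]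
      calc k '' (f '' F n) ⊆ k '' B := by
            apply image_mono
            exact (image_mono (f := f) ih).trans (hfimg ▸ hB')
        _ = A' := hkimg
        _ ⊆ A := hA'
  have hCA : C ⊆ A := iUnion_subset hFA
  have hfC : f '' C ⊆ B := (image_mono (f := f) hCA).trans (hfimg ▸ hB')
  -- key identity
  have key : k '' (B \ f '' C) = A \ C := by
    apply Set.eq_of_subset_of_subset
    · rintro _ ⟨b, ⟨hbB, hbnf⟩, rfl⟩
      constructor
      · exact hA' (hkimg ▸ mem_image_of_mem k hbB)
      · intro hkC
        obtain ⟨n, hn⟩ := mem_iUnion.1 hkC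
        cases n with
        | zero => exact hn.2 (mem_image_of_mem k hbB)
        | succ n =>
          rw [hFs] at hn
          obtain ⟨b', hb', hkb'⟩ := hn
          have hb'B : b' ∈ B := by
            obtain ⟨c, hc, rfl⟩ := hb'
            exact hfC (mem_image_of_mem f (mem_iUnion.2 ⟨n, hc⟩))
          have : b' = b := hkinj hb'B hbB hkb'
          subst this
          obtain ⟨c, hc, hfc⟩ := hb'
          exact hbnf ⟨c, mem_iUnion.2 ⟨n, hc⟩, hfc⟩
    · rintro x ⟨hxA, hxC⟩
      have hxk : x ∈ k '' B := by
        by_contra hxk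
        exact hxC (mem_iUnion.2 ⟨0, hxA, hxk⟩)
      obtain ⟨b, hbB, rfl⟩ := hxk
      refine ⟨b, ⟨hbB, ?_⟩, rfl⟩
      rintro ⟨c, hcC, rfl⟩
      obtain ⟨n, hn⟩ := mem_iUnion.1 hcC
      exact hxC (mem_iUnion.2 ⟨n + 1, (hFs n) ▸ ⟨f c, mem_image_of_mem f hn, rfl⟩⟩)
  -- assemble
  have e1 : SetEquidecomp G C (f '' C) := equidecomp_restrict hfinj hfpc hCA
  have e2 : SetEquidecomp G (A \ C) (B \ f '' C) := by
    have := equidecomp_restrict hkinj hkpc (diff_subset : B \ f '' C ⊆ B)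
    rw [key] at this
    exact this.symm
  have := e1.union e2 (disjoint_sdiff_right) (disjoint_sdiff_right)
  rwa [union_diff_cancel hCA, union_diff_cancel hfC] at this
end

section
/- If X ⊆ ℝ³, D ⊆ X is countable, L is a line through the origin avoiding D, and every rotation about L maps D into X, then X \ D is SO(3)-equidecomposable with X. -/
open scoped Pointwise

abbrev E3 : Type := EuclideanSpace ℝ (Fin 3)
abbrev SO3 : Type := Matrix.specialOrthogonalGroup (Fin 3) ℝ

noncomputable instance : Group SO3 :=
  { (inferInstance : Monoid SO3) with
    inv := fun A => ⟨star A.1, by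
      refine ⟨Unitary.star_mem A.2.1, ?_⟩
      show (star A.1).det = 1
      have h : A.1.det = 1 := A.2.2
      rw [Matrix.star_eq_conjTranspose, Matrix.det_conjTranspose, h]
      simp⟩
    inv_mul_cancel := fun A => Subtype.ext (Matrix.mem_unitaryGroup_iff'.mp A.2.1) }

noncomputable instance : SMul SO3 E3 := ⟨fun g x => WithLp.toLp 2 (g.1.mulVec x.ofLp)⟩

/-- `SO3` acts on `ℝ³` by rotation (matrix-vector multiplication). -/
noncomputable instance : MulAction SO3 E3 where
  one_smul x := by
    show WithLp.toLp 2 ((1 : SO3).1.mulVec x.ofLp) = x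
    simp
  mul_smul g h x := by
    show WithLp.toLp 2 ((g * h).1.mulVec x.ofLp) = WithLp.toLp 2 (g.1.mulVec (WithLp.toLp 2 (h.1.mulVec x.ofLp)).ofLp)
    simp [Matrix.mulVec_mulVec]

lemma SO3.smul_add (g : SO3) (x y : E3) : g • (x + y) = g • x + g • y :=
  congrArg (WithLp.toLp 2) (Matrix.mulVec_add g.1 x.ofLp y.ofLp)

lemma SO3.smul_neg (g : SO3) (x : E3) : g • (-x) = -(g • x) :=
  congrArg (WithLp.toLp 2) (Matrix.mulVec_neg x.ofLp g.1)

open Matrix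

noncomputable def rotM (θ : ℝ) : Matrix (Fin 3) (Fin 3) ℝ :=
  !![Real.cos θ, -Real.sin θ, 0; Real.sin θ, Real.cos θ, 0; 0, 0, 1]

lemma rotM_mul (θ φ : ℝ) : rotM θ * rotM φ = rotM (θ + φ) := by
  ext i j
  fin_cases i <;> fin_cases j <;>
    simp [rotM, Matrix.mul_apply, Fin.sum_univ_three, Real.cos_add, Real.sin_add,
      Matrix.vecHead, Matrix.vecTail] <;> ring

lemma rotM_zero : rotM 0 = 1 := by
  ext i j; fin_cases i <;> fin_cases j <;> simp [rotM, Matrix.vecHead, Matrix.vecTail]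

lemma rotM_det (θ : ℝ) : (rotM θ).det = 1 := by
  simp [rotM, Matrix.det_fin_three]
  nlinarith [Real.sin_sq_add_cos_sq θ]

lemma rotM_transpose (θ : ℝ) : (rotM θ)ᵀ = rotM (-θ) := by
  ext i j; fin_cases i <;> fin_cases j <;>
    simp [rotM, Matrix.vecHead, Matrix.vecTail]

noncomputable def bmat (b : OrthonormalBasis (Fin 3) ℝ E3) : Matrix (Fin 3) (Fin 3) ℝ :=
  Matrix.of fun i j => b j i

lemma bmat_tmul (b : OrthonormalBasis (Fin 3) ℝ E3) : (bmat b)ᵀ * bmat b = 1 := by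
  ext i j
  have h := orthonormal_iff_ite.mp b.orthonormal i j
  simp [PiLp.inner_apply, RCLike.inner_apply] at h
  simp [bmat, Matrix.mul_apply, Matrix.one_apply]
  rw [← h]; exact Finset.sum_congr rfl fun _ _ => mul_comm _ _

lemma bmat_mult (b : OrthonormalBasis (Fin 3) ℝ E3) : bmat b * (bmat b)ᵀ = 1 :=
  mul_eq_one_comm.mp (bmat_tmul b)

noncomputable def axisRot (b : OrthonormalBasis (Fin 3) ℝ E3) (θ : ℝ) :
    Matrix (Fin 3) (Fin 3) ℝ :=
  bmat b * rotM θ * (bmat b)ᵀ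

lemma axisRot_mul (b : OrthonormalBasis (Fin 3) ℝ E3) (θ φ : ℝ) :
    axisRot b θ * axisRot b φ = axisRot b (θ + φ) := by
  unfold axisRot
  simp only [Matrix.mul_assoc]
  rw [← Matrix.mul_assoc ((bmat b)ᵀ) (bmat b), bmat_tmul, Matrix.one_mul,
    ← Matrix.mul_assoc (rotM θ) (rotM φ), rotM_mul]

lemma axisRot_mem (b : OrthonormalBasis (Fin 3) ℝ E3) (θ : ℝ) :
    axisRot b θ ∈ Matrix.specialOrthogonalGroup (Fin 3) ℝ := by
  rw [Matrix.mem_specialOrthogonalGroup_iff]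
  constructor
  · rw [Matrix.mem_orthogonalGroup_iff]
    have : star (axisRot b θ) = axisRot b (-θ) := by
      simp only [Matrix.star_eq_conjTranspose, Matrix.conjTranspose_eq_transpose_of_trivial,
        axisRot, Matrix.transpose_mul, Matrix.transpose_transpose, rotM_transpose,
        Matrix.mul_assoc]
    rw [← Matrix.conjTranspose_eq_transpose_of_trivial, ← Matrix.star_eq_conjTranspose, this, axisRot_mul, add_neg_cancel]
    unfold axisRot
    rw [rotM_zero, Matrix.mul_one, bmat_mult]
  · have hB : (bmat b).det * (bmat b).det = 1 := by
      have := congrArg Matrix.det (bmat_tmul b)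
      simpa [Matrix.det_mul, mul_comm] using this
    simp [axisRot, Matrix.det_mul, rotM_det]
    nlinarith [hB]

lemma axisRot_zero (b : OrthonormalBasis (Fin 3) ℝ E3) : axisRot b 0 = 1 := by
  unfold axisRot; rw [rotM_zero, Matrix.mul_one, bmat_mult]

lemma axisRot_fix (b : OrthonormalBasis (Fin 3) ℝ E3) (θ : ℝ) :
    (axisRot b θ).mulVec (b 2) = b 2 := by
  have h1 : (bmat b)ᵀ.mulVec (b 2) = (fun i => if i = 2 then 1 else 0 : Fin 3 → ℝ) := by
    funext i
    have h := orthonormal_iff_ite.mp b.orthonormal i 2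
    simp [PiLp.inner_apply, RCLike.inner_apply] at h
    simp [Matrix.mulVec, dotProduct, bmat]
    rw [← h]; exact Finset.sum_congr rfl fun _ _ => mul_comm _ _
  have h2 : (rotM θ).mulVec (fun i => if i = 2 then 1 else 0 : Fin 3 → ℝ)
      = (fun i => if i = 2 then 1 else 0 : Fin 3 → ℝ) := by
    funext i
    fin_cases i <;>
      simp [rotM, Matrix.mulVec, dotProduct, Fin.sum_univ_three,
        Matrix.vecHead, Matrix.vecTail, Fin.ext_iff]
  have h3 : (bmat b).mulVec (fun i => if i = 2 then 1 else 0 : Fin 3 → ℝ) = b 2 := by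
    funext k
    simp [bmat, Matrix.mulVec, dotProduct, Fin.sum_univ_three, Fin.ext_iff]
  calc (axisRot b θ).mulVec (b 2)
      = (bmat b).mulVec ((rotM θ).mulVec ((bmat b)ᵀ.mulVec (b 2))) := by
        rw [Matrix.mulVec_mulVec, Matrix.mulVec_mulVec]; rfl
    _ = b 2 := by rw [h1, h2, h3]

lemma axisRot_inj (b : OrthonormalBasis (Fin 3) ℝ E3) {x : E3}
    (h01 : ¬ ((∑ j, b 0 j * x j) = 0 ∧ (∑ j, b 1 j * x j) = 0))
    {θ φ : ℝ} (h : (axisRot b θ).mulVec x = (axisRot b φ).mulVec x) :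
    ∃ k : ℤ, θ - φ = 2 * Real.pi * k := by
  have e : ∀ ψ : ℝ, (bmat b)ᵀ.mulVec ((axisRot b ψ).mulVec x)
      = (rotM ψ).mulVec ((bmat b)ᵀ.mulVec x) := by
    intro ψ
    rw [Matrix.mulVec_mulVec, Matrix.mulVec_mulVec]
    unfold axisRot
    simp only [← Matrix.mul_assoc]
    rw [bmat_tmul, Matrix.one_mul]
  have hc : (rotM θ).mulVec ((bmat b)ᵀ.mulVec x) = (rotM φ).mulVec ((bmat b)ᵀ.mulVec x) := by
    rw [← e, ← e, h]
  set v : Fin 3 → ℝ := (bmat b)ᵀ.mulVec x with hv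
  have hcc : ∀ i, v i = ∑ j, b i j * x j := by
    intro i; simp [hv, Matrix.mulVec, dotProduct, bmat]
  have k0 : ∀ ψ : ℝ, ((rotM ψ).mulVec v) 0 = Real.cos ψ * v 0 - Real.sin ψ * v 1 := by
    intro ψ
    show ∑ j, rotM ψ 0 j * v j = _
    rw [Fin.sum_univ_three]
    show Real.cos ψ * v 0 + -Real.sin ψ * v 1 + 0 * v 2 = _
    ring
  have k1 : ∀ ψ : ℝ, ((rotM ψ).mulVec v) 1 = Real.sin ψ * v 0 + Real.cos ψ * v 1 := by
    intro ψ
    show ∑ j, rotM ψ 1 j * v j = _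
    rw [Fin.sum_univ_three]
    show Real.sin ψ * v 0 + Real.cos ψ * v 1 + 0 * v 2 = _
    ring
  have h0 : Real.cos θ * v 0 - Real.sin θ * v 1 = Real.cos φ * v 0 - Real.sin φ * v 1 := by
    rw [← k0, ← k0, hc]
  have h1 : Real.sin θ * v 0 + Real.cos θ * v 1 = Real.sin φ * v 0 + Real.cos φ * v 1 := by
    rw [← k1, ← k1, hc]
  have hvv : ¬ (v 0 = 0 ∧ v 1 = 0) := by
    rw [hcc 0, hcc 1]; exact h01
  have hsq : v 0 ^ 2 + v 1 ^ 2 ≠ 0 := by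
    intro hz
    exact hvv ⟨by nlinarith [sq_nonneg (v 0), sq_nonneg (v 1)],
      by nlinarith [sq_nonneg (v 0), sq_nonneg (v 1)]⟩
  have hcos : Real.cos θ = Real.cos φ := by
    have hA : (Real.cos θ - Real.cos φ) * (v 0 ^ 2 + v 1 ^ 2) = 0 := by
      linear_combination (v 0) * h0 + (v 1) * h1
    rcases mul_eq_zero.mp hA with hA | hA
    · linarith
    · exact absurd hA hsq
  have hsin : Real.sin θ = Real.sin φ := by
    have hS : (Real.sin θ - Real.sin φ) * (v 0 ^ 2 + v 1 ^ 2) = 0 := by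
      linear_combination (v 0) * h1 - (v 1) * h0
    rcases mul_eq_zero.mp hS with hS | hS
    · linarith
    · exact absurd hS hsq
  have hang := Real.Angle.cos_sin_inj hcos hsin
  rw [Real.Angle.angle_eq_iff_two_pi_dvd_sub] at hang
  obtain ⟨k, hk⟩ := hang
  exact ⟨k, hk⟩

/-- Absorbing a countable set by an irrational rotation: if `D ⊆ X` is countable, the
line `L` (spanned by `u ≠ 0`) through the origin avoids `D`, and every rotation about `L`
maps `D` into `X`, then `X \ D` is `SO(3)`-equidecomposable with `X`. -/
theorem equidecomp_diff_countable (X D : Set E3) (hDX : D ⊆ X) (hD : D.Countable)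
    (u : E3) (hu : u ≠ 0) (hdisj : ∀ x ∈ D, x ∉ Submodule.span ℝ {u})
    (hrot : ∀ ρ : SO3, (∀ x ∈ Submodule.span ℝ {u}, ρ • x = x) → ρ • D ⊆ X) :
    SetEquidecomp SO3 (X \ D) X := by
  classical
  -- the unit vector along the axis, and an orthonormal basis whose third vector is it
  have hnu : ‖u‖ ≠ 0 := norm_ne_zero_iff.mpr hu
  have horth : Orthonormal ℝ (Set.restrict {(2 : Fin 3)} (fun _ : Fin 3 => (‖u‖⁻¹ : ℝ) • u)) := by
    constructor
    · rintro ⟨i, hi⟩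
      show ‖(‖u‖⁻¹ : ℝ) • u‖ = 1
      simp [norm_smul, inv_mul_cancel₀ hnu]
    · rintro ⟨i, hi⟩ ⟨j, hj⟩ hij
      exact absurd (Subtype.ext ((Set.eq_of_mem_singleton hi).trans
        (Set.eq_of_mem_singleton hj).symm)) hij
  obtain ⟨b, hb⟩ := Orthonormal.exists_orthonormalBasis_extension_of_card_eq
    (𝕜 := ℝ) (by simp [finrank_euclideanSpace]) horth
  have hb2 : b 2 = (‖u‖⁻¹ : ℝ) • u := hb 2 rfl
  have hub : u = ‖u‖ • b 2 := by
    rw [hb2, smul_smul, mul_inv_cancel₀ hnu, one_smul]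
  -- rotations about the axis, as elements of SO3
  set ρf : ℝ → SO3 := fun θ => ⟨axisRot b θ, axisRot_mem b θ⟩ with hρf
  have hsmul : ∀ (θ : ℝ) (x : E3), ρf θ • x = WithLp.toLp 2 ((axisRot b θ).mulVec x) := fun _ _ => rfl
  have hmul : ∀ θ φ : ℝ, ρf θ * ρf φ = ρf (θ + φ) := fun θ φ =>
    Subtype.ext (axisRot_mul b θ φ)
  have hone : ρf 0 = 1 := Subtype.ext (axisRot_zero b)
  have hpow : ∀ (θ : ℝ) (n : ℕ), (ρf θ) ^ n = ρf (n * θ) := by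
    intro θ n
    induction n with
    | zero => simp [hone]
    | succ n ih =>
      rw [pow_succ, ih, hmul]
      push_cast
      ring_nf
  -- rotations about the axis fix the axis
  have hfix : ∀ θ : ℝ, ∀ x ∈ Submodule.span ℝ {u}, ρf θ • x = x := by
    intro θ x hx
    obtain ⟨c, rfl⟩ := Submodule.mem_span_singleton.mp hx
    rw [hsmul, hub, smul_smul, WithLp.ofLp_smul, Matrix.mulVec_smul]
    rw [axisRot_fix b θ]; rfl
  -- points of `D` are off the axis
  have hoff : ∀ x ∈ D, ¬ ((∑ j, b 0 j * x j) = 0 ∧ (∑ j, b 1 j * x j) = 0) := by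
    intro x hx ⟨h0, h1⟩
    apply hdisj x hx
    have hrepr : ∀ i, (b.repr x) i = ∑ j, b i j * x j := by
      intro i
      rw [b.repr_apply_apply]
      simp [PiLp.inner_apply, RCLike.inner_apply]
      exact Finset.sum_congr rfl fun _ _ => mul_comm _ _
    have hxe : x = (∑ j, b 2 j * x j) • b 2 := by
      have hs := b.sum_repr x
      rw [Fin.sum_univ_three, hrepr 0, hrepr 1, hrepr 2, h0, h1] at hs
      simpa using hs.symm
    rw [Submodule.mem_span_singleton]
    exact ⟨(∑ j, b 2 j * x j) * ‖u‖⁻¹, by rw [← smul_smul, ← hb2, ← hxe]⟩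
  -- the set of bad angles is countable
  haveI := hD.to_subtype
  set Bad : Set ℝ :=
    ⋃ q : (↥D × ↥D × ℕ), {θ : ℝ | (axisRot b ((q.2.2 + 1) * θ)).mulVec q.1.1 = (q.2.1 : E3)}
    with hBad
  have hBadc : Bad.Countable := by
    refine Set.countable_iUnion fun q => ?_
    obtain ⟨⟨x, hx⟩, ⟨y, hy⟩, n⟩ := q
    simp only
    rcases Set.eq_empty_or_nonempty {θ : ℝ | (axisRot b ((n + 1) * θ)).mulVec x = y} with he | ⟨θ₀, hθ₀⟩
    · rw [he]; exact Set.countable_empty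
    · refine Set.Countable.mono ?_
        (Set.countable_range fun k : ℤ => θ₀ + 2 * Real.pi * k / (n + 1))
      intro θ hθ
      have heq : (axisRot b ((n + 1) * θ)).mulVec x = (axisRot b ((n + 1) * θ₀)).mulVec x := by
        rw [hθ, hθ₀]
      obtain ⟨k, hk⟩ := axisRot_inj b (hoff x hx) heq
      refine ⟨k, ?_⟩
      have hn : ((n : ℝ) + 1) ≠ 0 := by positivity
      field_simp
      linarith [hk]
  -- choose a good angle
  obtain ⟨θ, hθ⟩ : ∃ θ : ℝ, θ ∉ Bad := by
    by_contra hcon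
    push_neg at hcon
    exact Cardinal.not_countable_real (Set.eq_univ_of_forall hcon ▸ hBadc)
  set ρ : SO3 := ρf θ with hρ
  have hρpow : ∀ n : ℕ, ρ ^ n = ρf (n * θ) := fun n => hpow θ n
  -- key: positive powers of ρ move D off itself
  have hkey : ∀ (n : ℕ), ∀ x ∈ D, (ρ ^ (n + 1)) • x ∉ D := by
    intro n x hx hmem
    apply hθ
    refine Set.mem_iUnion.mpr ⟨⟨⟨x, hx⟩, ⟨(ρ ^ (n + 1)) • x, hmem⟩, n⟩, ?_⟩
    show (axisRot b (((n : ℝ) + 1) * θ)).mulVec x = WithLp.ofLp ((ρ ^ (n + 1)) • x)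
    rw [hρpow (n + 1), hsmul, WithLp.ofLp_toLp, Nat.cast_add, Nat.cast_one]
  -- powers of ρ fix the axis, hence map D into X
  have hfixpow : ∀ n : ℕ, ∀ x ∈ Submodule.span ℝ {u}, (ρ ^ n) • x = x := by
    intro n x hx
    rw [hρpow n]
    exact hfix _ x hx
  have hDX' : ∀ n : ℕ, (ρ ^ n) • D ⊆ X := fun n => hrot _ (hfixpow n)
  -- the orbit set
  set T : Set E3 := ⋃ n : ℕ, (ρ ^ n) • D with hT
  have hsub1 : (⋃ n : ℕ, (ρ ^ (n + 1)) • D) ⊆ T :=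
    Set.iUnion_subset fun n => Set.subset_iUnion (fun m : ℕ => (ρ ^ m) • D) (n + 1)
  have hTX : T ⊆ X := Set.iUnion_subset fun n => hDX' n
  have hDT : D ⊆ T := by
    intro x hx
    exact Set.mem_iUnion.mpr ⟨0, by simpa using hx⟩
  have hUD : ∀ x ∈ (⋃ n : ℕ, (ρ ^ (n + 1)) • D), x ∉ D := by
    intro x hx
    obtain ⟨n, hn⟩ := Set.mem_iUnion.mp hx
    obtain ⟨z, hz, rfl⟩ := hn
    exact hkey n z hz
  -- the equidecomposition
  refine ⟨2, ![X \ T, ⋃ n : ℕ, (ρ ^ (n + 1)) • D], ![1, ρ⁻¹], ?_, ?_, ?_, ?_⟩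
  · have d : Disjoint (X \ T) (⋃ n : ℕ, (ρ ^ (n + 1)) • D) :=
      Set.disjoint_left.mpr fun a ha hb => ha.2 (hsub1 hb)
    intro i j hij
    fin_cases i <;> fin_cases j
    · exact absurd rfl hij
    · exact d
    · exact d.symm
    · exact absurd rfl hij
  · ext x
    simp only [Set.mem_iUnion, Fin.exists_fin_two, Matrix.cons_val_zero, Matrix.cons_val_one,
      Matrix.head_cons]
    constructor
    · rintro (hx | hx)
      · exact ⟨hx.1, fun hd => hx.2 (hDT hd)⟩
      · exact ⟨hTX (hsub1 (Set.mem_iUnion.mpr hx)), hUD x (Set.mem_iUnion.mpr hx)⟩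
    · rintro ⟨hxX, hxD⟩
      by_cases hxT : x ∈ T
      · obtain ⟨n, hn⟩ := Set.mem_iUnion.mp hxT
        match n, hn with
        | 0, hn => exact absurd (by simpa using hn) hxD
        | (m + 1), hn => exact Or.inr ⟨m, hn⟩
      · exact Or.inl ⟨hxX, hxT⟩
  · have himg1 : (1 : SO3) • (X \ T) = X \ T := one_smul _ _
    have himg2 : ρ⁻¹ • (⋃ n : ℕ, (ρ ^ (n + 1)) • D) = T := by
      erw [Set.smul_set_iUnion]
      refine Set.iUnion_congr fun n => ?_
      erw [smul_smul, pow_succ', inv_mul_cancel_left]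
    intro i j hij
    fin_cases i <;> fin_cases j
    · exact absurd rfl hij
    · show Disjoint ((1 : SO3) • (X \ T)) (ρ⁻¹ • ⋃ n : ℕ, (ρ ^ (n + 1)) • D)
      rw [himg1, himg2]
      exact disjoint_sdiff_self_left
    · show Disjoint (ρ⁻¹ • ⋃ n : ℕ, (ρ ^ (n + 1)) • D) ((1 : SO3) • (X \ T))
      rw [himg1, himg2]
      exact disjoint_sdiff_self_left.symm
    · exact absurd rfl hij
  · ext x
    simp only [Set.mem_iUnion, Fin.exists_fin_two, Matrix.cons_val_zero, Matrix.cons_val_one,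
      Matrix.head_cons]
    erw [one_smul]
    have himg2 : ρ⁻¹ • (⋃ n : ℕ, (ρ ^ (n + 1)) • D) = T := by
      erw [Set.smul_set_iUnion]
      refine Set.iUnion_congr fun n => ?_
      erw [smul_smul, pow_succ', inv_mul_cancel_left]
    erw [himg2]
    constructor
    · rintro (hx | hx)
      · exact hx.1
      · exact hTX hx
    · intro hx
      by_cases hxT : x ∈ T
      · exact Or.inr hxT
      · exact Or.inl ⟨hx, hxT⟩
end
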